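/- arXiv:math/0610707 — 2 statements merged into one kernel-verified Lean document; each statement's English description precedes it below -/
import Mathlib

section
/- The closure in ℝ^∞ of the set Δ^∞ = {x ∈ ℝ^∞ : Σ x_i = 1, 0 ≤ x_i ≤ 1, and only finitely many x_i are nonzero} equals Δ^∞₀ = {x ∈ ℝ^∞ : Σ_{i=1}^∞ x_i ≤ 1 and 0 ≤ x_i ≤ 1 for all i}. -/
open Set

/-- `Δ^∞`: convex combinations of the standard basis vectors, i.e. points with
finitely many nonzero coordinates, all in `[0,1]`, summing to `1`. -/
def DeltaInf : Set (ℕ → ℝ) :=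
  {x | (∀ i, 0 ≤ x i ∧ x i ≤ 1) ∧
    ∃ s : Finset ℕ, (∀ i ∉ s, x i = 0) ∧ ∑ i ∈ s, x i = 1}

/-- `Δ^∞₀`: coordinates in `[0,1]` with convergent total sum at most `1`. -/
def DeltaInfZero : Set (ℕ → ℝ) :=
  {x | (∀ i, 0 ≤ x i ∧ x i ≤ 1) ∧ Summable x ∧ ∑' i, x i ≤ 1}

lemma DeltaInfZero_eq :
    DeltaInfZero = {x : ℕ → ℝ | ∀ i, 0 ≤ x i ∧ x i ≤ 1} ∩
      {x : ℕ → ℝ | ∀ s : Finset ℕ, ∑ i ∈ s, x i ≤ 1} := by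
  ext x
  constructor
  · rintro ⟨h1, hs, ht⟩
    refine ⟨h1, fun s => le_trans ?_ ht⟩
    exact Summable.sum_le_tsum s (fun i _ => (h1 i).1) hs
  · rintro ⟨h1, h2⟩
    have hsum : Summable x := summable_of_sum_le (fun i => (h1 i).1) h2
    exact ⟨h1, hsum, Summable.tsum_le_of_sum_le hsum h2⟩

lemma isClosed_DeltaInfZero : IsClosed DeltaInfZero := by
  rw [DeltaInfZero_eq]
  apply IsClosed.inter
  · have : {x : ℕ → ℝ | ∀ i, 0 ≤ x i ∧ x i ≤ 1} =
        ⋂ i, ({x : ℕ → ℝ | 0 ≤ x i} ∩ {x : ℕ → ℝ | x i ≤ 1}) := by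
      ext x; simp [forall_and]
    rw [this]
    exact isClosed_iInter fun i =>
      (isClosed_le continuous_const (continuous_apply i)).inter
        (isClosed_le (continuous_apply i) continuous_const)
  · have : {x : ℕ → ℝ | ∀ s : Finset ℕ, ∑ i ∈ s, x i ≤ 1} =
        ⋂ s : Finset ℕ, {x : ℕ → ℝ | ∑ i ∈ s, x i ≤ 1} := by
      ext x; simp
    rw [this]
    exact isClosed_iInter fun s =>
      isClosed_le (by continuity) continuous_const

/-- In the product topology on `ℝ^∞`, the closure of `Δ^∞` is `Δ^∞₀`. -/
theorem closure_DeltaInf_eq_DeltaInfZero : closure DeltaInf = DeltaInfZero := by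
  apply Subset.antisymm
  · apply closure_minimal _ isClosed_DeltaInfZero
    rintro x ⟨h1, s, hs, hsum⟩
    rw [DeltaInfZero_eq]
    refine ⟨h1, fun t => ?_⟩
    calc ∑ i ∈ t, x i = ∑ i ∈ t ∩ s, x i := by
          refine (Finset.sum_subset (Finset.inter_subset_left) ?_).symm
          intro i hi hi'
          exact hs i (fun h => hi' (Finset.mem_inter.mpr ⟨hi, h⟩))
      _ ≤ ∑ i ∈ s, x i :=
          Finset.sum_le_sum_of_subset_of_nonneg Finset.inter_subset_right
            (fun i hi _ => (h1 i).1)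
      _ = 1 := hsum
  · rintro x ⟨h1, hsum, ht⟩
    -- approximate by truncations
    set y : ℕ → ℕ → ℝ := fun n i =>
      if i < n then x i else if i = n then 1 - ∑ j ∈ Finset.range n, x j else 0
      with hy
    have hpartial : ∀ n, ∑ j ∈ Finset.range n, x j ≤ 1 := fun n =>
      le_trans (Summable.sum_le_tsum _ (fun i _ => (h1 i).1) hsum) ht
    have hpos : ∀ n, 0 ≤ ∑ j ∈ Finset.range n, x j := fun n =>
      Finset.sum_nonneg fun i _ => (h1 i).1
    have hmem : ∀ n, y n ∈ DeltaInf := by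
      intro n
      refine ⟨fun i => ?_, Finset.range (n+1), fun i hi => ?_, ?_⟩
      · by_cases h : i < n
        · simp only [hy, h, if_pos]
          exact h1 i
        · by_cases h' : i = n
          · subst h'
            simp only [hy, lt_irrefl, if_false, if_true, eq_self_iff_true]
            constructor <;> [linarith [hpartial i]; linarith [hpos i]]
          · simp [hy, h, h']
      · have h2 : ¬ i < n := fun h => hi (Finset.mem_range.mpr (Nat.lt_succ_of_lt h))
        have h3 : i ≠ n := fun h => hi (Finset.mem_range.mpr (h ▸ Nat.lt_succ_self n))
        simp [hy, h2, h3]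
      · rw [Finset.sum_range_succ]
        have : ∀ j ∈ Finset.range n, y n j = x j := by
          intro j hj
          simp [hy, Finset.mem_range.mp hj]
        rw [Finset.sum_congr rfl this]
        simp [hy]
    have htend : Filter.Tendsto y Filter.atTop (nhds x) := by
      rw [tendsto_pi_nhds]
      intro i
      apply Filter.Tendsto.congr' _ (tendsto_const_nhds (x := x i))
      filter_upwards [Filter.eventually_gt_atTop i] with n hn
      simp [hy, hn]
    exact mem_closure_of_tendsto htend (Filter.Eventually.of_forall hmem)
end

section
/- The identity map g(x) = x is a homeomorphism from Δ^∞₀ (with the product topology of ℝ^∞) onto Δ^H₀ = {x ∈ H : Σ_{i=1}^∞ x_i ≤ 1 and 0 ≤ x_i ≤ 1} with the topology induced by the norm ‖x‖ = Σ_{i=1}^∞ |x_i|/2^i on H. -/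
open Filter

/-- The norm `‖x‖ = ∑_{i=1}^∞ |x_i|/2^i` of `H` (0-indexed, weight `2^(i+1)`). -/
noncomputable def Hnorm (x : ℕ → ℝ) : ℝ := ∑' i : ℕ, |x i| / 2 ^ (i + 1)

/-- `Δ^H₀`: the copy of the simplex inside `H`. -/
def DeltaHZero : Set (ℕ → ℝ) :=
  {x | (Summable fun i => |x i| / 2 ^ (i + 1)) ∧
    (∀ i, 0 ≤ x i ∧ x i ≤ 1) ∧ Summable x ∧ ∑' i, x i ≤ 1}

lemma summable_weight : Summable (fun i : ℕ => (1 : ℝ) / 2 ^ (i + 1)) := by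
  have h : Summable (fun i : ℕ => ((1:ℝ)/2) ^ (i + 1)) :=
    (summable_geometric_of_lt_one (by norm_num) (by norm_num)).comp_injective
      (add_left_injective 1)
  simpa [div_pow, one_div, pow_succ, mul_comm] using h

/-- The identity map is a homeomorphism from `Δ^∞₀` (product topology)
onto `Δ^H₀` (topology of the norm of `H`): the two sets coincide, and since both
topologies are metrizable, convergence of sequences in the product topology
agrees with convergence in the `H`-norm. -/
theorem id_homeo_DeltaInfZero_DeltaHZero :
    DeltaInfZero = DeltaHZero ∧
    ∀ (u : ℕ → (ℕ → ℝ)) (x : ℕ → ℝ), (∀ n, u n ∈ DeltaInfZero) → x ∈ DeltaInfZero →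
      (Tendsto u atTop (nhds x) ↔
        Tendsto (fun n => Hnorm (u n - x)) atTop (nhds 0)) := by
  constructor
  · ext x
    constructor
    · rintro ⟨h01, hs, hle⟩
      refine ⟨?_, h01, hs, hle⟩
      apply summable_weight.of_nonneg_of_le
        (fun i => by positivity)
      intro i
      have := (h01 i).1
      have := (h01 i).2
      gcongr
      rw [abs_le]; constructor <;> linarith
    · rintro ⟨_, h01, hs, hle⟩
      exact ⟨h01, hs, hle⟩
  · intro u x hu hx
    have hbd : ∀ n i, |(u n - x) i| ≤ 1 := by
      intro n i
      have h1 := (hu n).1 i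
      have h2 := hx.1 i
      simp only [Pi.sub_apply]
      rw [abs_le]; constructor <;> linarith [h1.1, h1.2, h2.1, h2.2]
    have hsum : ∀ n, Summable (fun i => |(u n - x) i| / 2 ^ (i + 1)) := by
      intro n
      apply summable_weight.of_nonneg_of_le (fun i => by positivity)
      intro i
      gcongr
      exacts [hbd n i]
    constructor
    · intro h
      rw [tendsto_pi_nhds] at h
      have key : Tendsto (fun n => ∑' i, |(u n - x) i| / 2 ^ (i + 1)) atTop
          (nhds (∑' i : ℕ, (0:ℝ))) := by
        apply tendsto_tsum_of_dominated_convergence (bound := fun i : ℕ => (1:ℝ)/2^(i+1))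
          summable_weight
        · intro i
          have : Tendsto (fun n => (u n i - x i)) atTop (nhds 0) := by
            simpa using (h i).sub_const (x i)
          have := this.abs
          simp only [abs_zero] at this
          simpa using this.div_const ((2:ℝ) ^ (i + 1))
        · filter_upwards with n i
          rw [Real.norm_eq_abs, abs_div, abs_abs, abs_of_pos (by positivity : (0:ℝ) < 2^(i+1))]
          gcongr
          exacts [hbd n i]
      simpa [Hnorm, tsum_zero] using key
    · intro h
      rw [tendsto_pi_nhds]
      intro i
      have hterm : ∀ n, |u n i - x i| / 2 ^ (i + 1) ≤ Hnorm (u n - x) := by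
        intro n
        exact Summable.le_tsum (hsum n) i (fun j _ => by positivity)
      have h1 : Tendsto (fun n => |u n i - x i| / 2 ^ (i + 1)) atTop (nhds 0) := by
        apply squeeze_zero (fun n => by positivity) hterm h
      have h2 : Tendsto (fun n => |u n i - x i|) atTop (nhds 0) := by
        have := h1.mul_const ((2:ℝ) ^ (i + 1))
        simp only [zero_mul] at this
        convert this using 2 with n
        field_simp
      have := (tendsto_zero_iff_abs_tendsto_zero _).mpr h2
      have := this.add_const (x i)
      simpa using this
end
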